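/- Proposition 5.1 (correctness of the Datalog translation): If a Herbrand structure M represents a world w and local name assignment l, then for all principal expressions p and all x, y ∈ K ∪ G ∪ N: M ⊨ τ_{x,y}(p) if and only if x, y ∈ K and w,l,x ⊨ p ▷ y. -/
import Mathlib


/-- Principal expressions over keys `K`, global names `G`, local names `N`. -/
inductive PExp (K G N : Type*) where
  | key : K → PExp K G N
  | glob : G → PExp K G N
  | loc : N → PExp K G N
  | s : PExp K G N → PExp K G N → PExp K G N

/-- Formulas of LLNC. -/
inductive Fml (K G N : Type*) where
  | bdto : PExp K G N → PExp K G N → Fml K G N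
  | cert : K → Fml K G N → Fml K G N
  | not : Fml K G N → Fml K G N
  | and : Fml K G N → Fml K G N → Fml K G N

/-- A world: an interpretation of global names and an assignment of
certificates to keys, with only finitely many certificates issued. -/
structure World (K G N : Type*) where
  beta : G → Set K
  certs : K → Set (Fml K G N)
  finite_certs : (⋃ k, certs k).Finite

variable {K G N : Type*}

/-- The interpretation of a principal expression relative to a world, a
local name assignment, and a key. -/
def interp (w : World K G N) (l : K → N → Set K) : PExp K G N → K → Set K
  | .key k', _ => {k'}
  | .glob g, _ => w.beta g
  | .loc n, k => l k n
  | .s p q, k => ⋃ k' ∈ interp w l p k, interp w l q k'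

/-- Satisfaction of a formula at a world, local name assignment, and key. -/
def Sat (w : World K G N) (l : K → N → Set K) (k : K) : Fml K G N → Prop
  | .bdto p q => interp w l q k ⊆ interp w l p k
  | .cert k' φ => φ ∈ w.certs k'
  | .not φ => ¬ Sat w l k φ
  | .and φ ψ => Sat w l k φ ∧ Sat w l k ψ

/-- A local name assignment is consistent with a world if every issued
binding certificate holds at the issuer. -/
def Consistent (w : World K G N) (l : K → N → Set K) : Prop :=
  ∀ (k : K) (n : N) (p : PExp K G N),
    Fml.bdto (.loc n) p ∈ w.certs k → Sat w l k (.bdto (.loc n) p)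

/-- The Herbrand domain: the constants `K ∪ G ∪ N`. -/
abbrev Dom (K G N : Type*) := K ⊕ (G ⊕ N)

/-- The constant for a key. -/
def dkey (k : K) : Dom K G N := Sum.inl k

/-- The constant for a global name. -/
def dglob (g : G) : Dom K G N := Sum.inr (Sum.inl g)

/-- The constant for a local name. -/
def dloc (n : N) : Dom K G N := Sum.inr (Sum.inr n)

/-- A Herbrand structure over the vocabulary `V`, identified with the set of
tuples of the ternary predicate `name` that it satisfies. -/
abbrev Herbrand (K G N : Type*) := Set (Dom K G N × Dom K G N × Dom K G N)

/-- Satisfaction of the translated formula `τ_{x,y}(p)` in a Herbrand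
structure `M`. -/
def tauSat (M : Herbrand K G N) : PExp K G N → Dom K G N → Dom K G N → Prop
  | .key k, x, y => (x, dkey k, y) ∈ M
  | .glob g, x, y => (x, dglob g, y) ∈ M
  | .loc n, x, y => (x, dloc n, y) ∈ M
  | .s q r, x, y => ∃ z : Dom K G N, tauSat M q x z ∧ tauSat M r z y

/-- `M` represents the world `w` and the local name assignment `l`. -/
def Represents (M : Herbrand K G N) (w : World K G N) (l : K → N → Set K) : Prop :=
  ∀ x y z : Dom K G N, (x, y, z) ∈ M ↔
    ((∃ k₁ k₂ : K, x = dkey k₁ ∧ y = dkey k₂ ∧ z = dkey k₂) ∨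
     (∃ (k₁ : K) (g : G) (k₂ : K), x = dkey k₁ ∧ y = dglob g ∧ z = dkey k₂ ∧ k₂ ∈ w.beta g) ∨
     (∃ (k₁ : K) (n : N) (k₂ : K), x = dkey k₁ ∧ y = dloc n ∧ z = dkey k₂ ∧ k₂ ∈ l k₁ n))

/-- Proposition 5.1: correctness of the Datalog translation. -/
theorem datalog_translation_correct [Nonempty K] (M : Herbrand K G N)
    (w : World K G N) (l : K → N → Set K) (hrep : Represents M w l)
    (p : PExp K G N) (x y : Dom K G N) :
    tauSat M p x y ↔ ∃ kx ky : K, x = dkey kx ∧ y = dkey ky ∧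
      Sat w l kx (.bdto p (.key ky)) := by
  have hkey : ∀ (p : PExp K G N) (kx ky : K),
      Sat w l kx (.bdto p (.key ky)) ↔ ky ∈ interp w l p kx := by
    intro p kx ky
    simp [Sat, interp, Set.singleton_subset_iff]
  have hinj : ∀ a b : K, dkey (K := K) (G := G) (N := N) a = dkey b → a = b := by
    intro a b h; simpa [dkey] using h
  induction p generalizing x y with
  | key k =>
    simp only [tauSat, hkey]
    rw [hrep x (dkey k) y]
    constructor
    · rintro (⟨k1, k2, hx, hk, hy⟩ | ⟨k1, g, k2, hx, hk, hy, _⟩ | ⟨k1, n, k2, hx, hk, hy, _⟩)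
      · exact ⟨k1, k, hx, by rw [hy, hinj _ _ hk], by simp [interp]⟩
      · simp [dkey, dglob] at hk
      · simp [dkey, dloc] at hk
    · rintro ⟨kx, ky, hx, hy, hmem⟩
      simp [interp] at hmem
      exact Or.inl ⟨kx, k, hx, rfl, by rw [hy, hmem]⟩
  | glob g =>
    simp only [tauSat, hkey]
    rw [hrep x (dglob g) y]
    constructor
    · rintro (⟨k1, k2, hx, hk, hy⟩ | ⟨k1, g', k2, hx, hk, hy, hb⟩ | ⟨k1, n, k2, hx, hk, hy, _⟩)
      · simp [dkey, dglob] at hk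
      · have : g' = g := by simpa [dglob] using hk.symm
        subst this
        exact ⟨k1, k2, hx, hy, by simpa [interp] using hb⟩
      · simp [dglob, dloc] at hk
    · rintro ⟨kx, ky, hx, hy, hmem⟩
      simp [interp] at hmem
      exact Or.inr (Or.inl ⟨kx, g, ky, hx, rfl, hy, hmem⟩)
  | loc n =>
    simp only [tauSat, hkey]
    rw [hrep x (dloc n) y]
    constructor
    · rintro (⟨k1, k2, hx, hk, hy⟩ | ⟨k1, g, k2, hx, hk, hy, _⟩ | ⟨k1, n', k2, hx, hk, hy, hb⟩)
      · simp [dkey, dloc] at hk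
      · simp [dglob, dloc] at hk
      · have : n' = n := by simpa [dloc] using hk.symm
        subst this
        subst hx
        exact ⟨k1, k2, rfl, hy, by simpa [interp] using hb⟩
    · rintro ⟨kx, ky, hx, hy, hmem⟩
      simp [interp] at hmem
      exact Or.inr (Or.inr ⟨kx, n, ky, hx, rfl, hy, hmem⟩)
  | s q r ihq ihr =>
    simp only [tauSat, hkey] at *
    constructor
    · rintro ⟨z, hq, hr⟩
      obtain ⟨kx, kz, hx, hz, hmq⟩ := (ihq x z).mp hq
      obtain ⟨kz', ky, hz', hy, hmr⟩ := (ihr z y).mp hr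
      have : kz' = kz := hinj _ _ (hz' ▸ hz : dkey kz' = dkey kz).symm ▸ rfl
      refine ⟨kx, ky, hx, hy, ?_⟩
      simp only [interp, Set.mem_iUnion]
      refine ⟨kz, hmq, ?_⟩
      have hkz : kz' = kz := hinj _ _ (by rw [← hz, ← hz'])
      rw [← hkz]; exact hmr
    · rintro ⟨kx, ky, hx, hy, hmem⟩
      simp only [interp, Set.mem_iUnion] at hmem
      obtain ⟨kz, hmq, hmr⟩ := hmem
      exact ⟨dkey kz, (ihq x (dkey kz)).mpr ⟨kx, kz, hx, rfl, hmq⟩,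
        (ihr (dkey kz) y).mpr ⟨kz, ky, rfl, hy, hmr⟩⟩
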